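/- For every κ > 0 there exist r₀ ∈ (0,1) and c > 0 such that for all r ∈ [r₀, 1), q_κ(r) ≤ p(κ) − c√(1−r), where p(κ) = P(|Z| ≤ κ) for a standard Gaussian Z and q_κ(r) = P(|Z₀| ≤ κ, |Z_r| ≤ κ) for a centered bivariate Gaussian pair with unit variances and correlation r. -/

import Mathlib

open MeasureTheory ProbabilityTheory

lemma pdf_anti {x y : ℝ} (hx : 0 ≤ x) (hxy : x ≤ y) :
    gaussianPDFReal 0 1 y ≤ gaussianPDFReal 0 1 x := by
  simp only [gaussianPDFReal, sub_zero, NNReal.coe_one, mul_one]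
  gcongr

lemma gauss_Ioc_lb {a b : ℝ} (ha : 0 ≤ a) :
    ENNReal.ofReal ((b - a) * gaussianPDFReal 0 1 b) ≤ gaussianReal 0 1 (Set.Ioc a b) := by
  rw [gaussianReal_apply 0 one_ne_zero]
  calc ENNReal.ofReal ((b - a) * gaussianPDFReal 0 1 b)
      = ∫⁻ _ in Set.Ioc a b, ENNReal.ofReal (gaussianPDFReal 0 1 b) := by
        rw [setLIntegral_const, Real.volume_Ioc, ← ENNReal.ofReal_mul
          (gaussianPDFReal_nonneg 0 1 b), mul_comm]
    _ ≤ ∫⁻ x in Set.Ioc a b, gaussianPDF 0 1 x := by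
        refine setLIntegral_mono (measurable_gaussianPDF 0 1) fun x hx => ?_
        exact ENNReal.ofReal_le_ofReal (pdf_anti (le_trans ha hx.1.le) hx.2)

/-- `p κ = P(|Z| ≤ κ)` for a standard Gaussian `Z`. -/
noncomputable def pGauss (κ : ℝ) : ℝ := ((gaussianReal 0 1) {z : ℝ | |z| ≤ κ}).toReal

/-- `q κ r = P(|Z₀| ≤ κ, |Z_r| ≤ κ)` for a correlation-`r` bivariate standard Gaussian pair. -/
noncomputable def qGauss (κ r : ℝ) : ℝ :=
  (((gaussianReal 0 1).prod (gaussianReal 0 1))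
    {p : ℝ × ℝ | |p.1| ≤ κ ∧ |r * p.1 + Real.sqrt (1 - r ^ 2) * p.2| ≤ κ}).toReal

/-- For every `κ > 0` there exist `r₀ ∈ (0,1)` and `c > 0` such that
`q_κ(r) ≤ p(κ) − c√(1−r)` for all `r ∈ [r₀, 1)`. -/
theorem stmt4 (κ : ℝ) (hκ : 0 < κ) :
    ∃ r₀ ∈ Set.Ioo (0 : ℝ) 1, ∃ c > (0 : ℝ),
      ∀ r ∈ Set.Ico r₀ 1, qGauss κ r ≤ pGauss κ - c * Real.sqrt (1 - r) := by
  set μ := gaussianReal 0 1 with hμ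
  have hprob : IsProbabilityMeasure μ := by infer_instance
  set c : ℝ := κ * gaussianPDFReal 0 1 κ * gaussianPDFReal 0 1 (2 * κ + 1) with hc
  have hcpos : 0 < c := by
    have h1 := gaussianPDFReal_pos 0 1 κ one_ne_zero
    have h2 := gaussianPDFReal_pos 0 1 (2 * κ + 1) one_ne_zero
    positivity
  refine ⟨1/2, ⟨by norm_num, by norm_num⟩, c, hcpos, fun r hr => ?_⟩
  obtain ⟨hr0, hr1⟩ := hr
  have hr0' : (0:ℝ) < r := lt_of_lt_of_le (by norm_num) hr0
  set s : ℝ := Real.sqrt (1 - r ^ 2) with hs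
  have hs_pos : 0 < s := Real.sqrt_pos.mpr (by nlinarith)
  have hs_le_one : s ≤ 1 := Real.sqrt_le_one.mpr (by nlinarith)
  set ε : ℝ := κ * s with hε
  have hε_pos : 0 < ε := by positivity
  have hε_le : ε ≤ κ := by nlinarith
  -- the sets
  set A : Set (ℝ × ℝ) := {p : ℝ × ℝ | |p.1| ≤ κ} with hA
  set B : Set (ℝ × ℝ) := {p : ℝ × ℝ | |p.1| ≤ κ ∧ |r * p.1 + s * p.2| ≤ κ} with hB
  have hBmeas : MeasurableSet B := by
    apply MeasurableSet.inter
    · exact measurableSet_le (measurable_fst.abs) measurable_const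
    · exact measurableSet_le ((measurable_fst.const_mul r).add
        (measurable_snd.const_mul s)).abs measurable_const
  have hBA : B ⊆ A := fun p hp => hp.1
  -- rectangle contained in A \ B
  set R : Set (ℝ × ℝ) := Set.Ioc (κ - ε) κ ×ˢ Set.Ioi (2 * κ) with hR
  have hRsub : R ⊆ A \ B := by
    rintro ⟨x, y⟩ ⟨hx, hy⟩
    simp only [Set.mem_Ioc, Set.mem_Ioi] at hx hy
    have hx0 : 0 ≤ x := le_trans (by linarith) hx.1.le
    have hxκ : |x| ≤ κ := abs_le.mpr ⟨by linarith, hx.2⟩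
    refine ⟨hxκ, fun hmem => ?_⟩
    have hgt : κ < r * x + s * y := by
      have h1 : r * (κ - ε) ≤ r * x := by nlinarith [hx.1.le]
      have h2 : s * (2 * κ) < s * y := by nlinarith
      have h3 : (1 : ℝ) - r ≤ s := by
        have : Real.sqrt ((1 - r) ^ 2) ≤ s := by
          apply Real.sqrt_le_sqrt; nlinarith
        rwa [Real.sqrt_sq (by linarith)] at this
      nlinarith
    have := hmem.2
    rw [abs_le] at this
    linarith [this.2]
  -- measure computations
  have hμA : (μ.prod μ) A = μ {z : ℝ | |z| ≤ κ} := by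
    have : A = {z : ℝ | |z| ≤ κ} ×ˢ (Set.univ : Set ℝ) := by
      ext ⟨x, y⟩; simp [hA]
    rw [this, Measure.prod_prod, measure_univ, mul_one]
  have hμR : (μ.prod μ) R = μ (Set.Ioc (κ - ε) κ) * μ (Set.Ioi (2 * κ)) := by
    rw [hR, Measure.prod_prod]
  -- lower bounds
  have hIoc : ENNReal.ofReal (ε * gaussianPDFReal 0 1 κ) ≤ μ (Set.Ioc (κ - ε) κ) := by
    have := gauss_Ioc_lb (a := κ - ε) (b := κ) (by linarith)
    simpa using this
  have hIoi : ENNReal.ofReal (gaussianPDFReal 0 1 (2 * κ + 1)) ≤ μ (Set.Ioi (2 * κ)) := by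
    refine le_trans ?_ (measure_mono (Set.Ioc_subset_Ioi_self
      (a := 2 * κ + 1) (b := 2 * κ)))
    have := gauss_Ioc_lb (a := 2 * κ) (b := 2 * κ + 1) (by linarith)
    simpa using this
  have hdiff_lb : ENNReal.ofReal (ε * gaussianPDFReal 0 1 κ * gaussianPDFReal 0 1 (2 * κ + 1))
      ≤ (μ.prod μ) (A \ B) := by
    refine le_trans ?_ (measure_mono hRsub)
    rw [hμR, ENNReal.ofReal_mul (mul_nonneg hε_pos.le (gaussianPDFReal_nonneg 0 1 κ))]
    exact mul_le_mul' hIoc hIoi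
  -- decomposition
  have hsplit : (μ.prod μ) B + (μ.prod μ) (A \ B) = (μ.prod μ) A := by
    have := measure_inter_add_diff (μ := μ.prod μ) A hBmeas
    rwa [Set.inter_eq_self_of_subset_right hBA] at this
  have hfinB : (μ.prod μ) B ≠ ⊤ := measure_ne_top _ _
  have hfinD : (μ.prod μ) (A \ B) ≠ ⊤ := measure_ne_top _ _
  have hq : qGauss κ r = ((μ.prod μ) B).toReal := by rw [qGauss]
  have hp : pGauss κ = ((μ.prod μ) A).toReal := by rw [pGauss, hμA]
  have hsplit' : ((μ.prod μ) B).toReal + ((μ.prod μ) (A \ B)).toReal = pGauss κ := by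
    rw [hp, ← hsplit, ENNReal.toReal_add hfinB hfinD]
  have hD_lb : ε * gaussianPDFReal 0 1 κ * gaussianPDFReal 0 1 (2 * κ + 1)
      ≤ ((μ.prod μ) (A \ B)).toReal := by
    have := ENNReal.toReal_mono hfinD hdiff_lb
    rwa [ENNReal.toReal_ofReal (mul_nonneg (mul_nonneg hε_pos.le (gaussianPDFReal_nonneg 0 1 κ)) (gaussianPDFReal_nonneg 0 1 (2 * κ + 1)))] at this
  have hεlb : κ * Real.sqrt (1 - r) ≤ ε := by
    rw [hε, hs]
    have : Real.sqrt (1 - r) ≤ Real.sqrt (1 - r ^ 2) := by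
      apply Real.sqrt_le_sqrt; nlinarith
    nlinarith [Real.sqrt_nonneg (1 - r)]
  have hclb : c * Real.sqrt (1 - r) ≤ ((μ.prod μ) (A \ B)).toReal := by
    refine le_trans ?_ hD_lb
    rw [hc]
    have h1 := (gaussianPDFReal_pos 0 1 κ one_ne_zero).le
    have h2 := (gaussianPDFReal_pos 0 1 (2 * κ + 1) one_ne_zero).le
    nlinarith
  rw [hq]
  linarith
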